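/- Let φ(x,y) := (x−1)²(y−1)²/(xy). For every real t with 0 < t ≤ 1/16, the series ∑_{m≥1} binom(2m,m)²·t^m/m converges, the function (θ,η) ↦ log|t⁻¹ − φ(e^{iθ}, e^{iη})| is integrable on [0,2π]², and (1/(2π)²) · ∫₀^{2π} ∫₀^{2π} log|t⁻¹ − φ(e^{iθ}, e^{iη})| dθ dη = −log t − ∑_{m≥1} binom(2m,m)²·t^m/m. -/

import Mathlib

open MeasureTheory

/-- `φ(x,y) = (x−1)²(y−1)²/(xy)`. -/
noncomputable def phiE (x y : ℂ) : ℂ := (x - 1) ^ 2 * (y - 1) ^ 2 / (x * y)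

namespace Stmt11Aux

open Real
open scoped ENNReal NNReal

noncomputable def c (θ : ℝ) : ℝ := 2 - 2 * Real.cos θ

lemma c_nonneg (θ : ℝ) : 0 ≤ c θ := by
  have := Real.cos_le_one θ; unfold c; linarith

lemma c_le_four (θ : ℝ) : c θ ≤ 4 := by
  have := Real.neg_one_le_cos θ; unfold c; linarith

lemma c_cont : Continuous c := by unfold c; continuity

lemma exp_sub_one_sq (θ : ℝ) :
    (Complex.exp (θ * Complex.I) - 1) ^ 2 = -((c θ : ℝ) : ℂ) * Complex.exp (θ * Complex.I) := by
  have h : Complex.sin θ ^ 2 + Complex.cos θ ^ 2 = 1 := Complex.sin_sq_add_cos_sq _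
  have h2 : (Complex.I : ℂ) ^ 2 = -1 := Complex.I_sq
  rw [Complex.exp_mul_I]
  unfold c
  push_cast
  linear_combination (-1 : ℂ) * h + (Complex.sin θ)^2 * h2

lemma phi_eq (θ η : ℝ) :
    phiE (Complex.exp (θ * Complex.I)) (Complex.exp (η * Complex.I)) = ((c θ * c η : ℝ) : ℂ) := by
  have hx : Complex.exp (↑θ * Complex.I) ≠ 0 := Complex.exp_ne_zero _
  have hy : Complex.exp (↑η * Complex.I) ≠ 0 := Complex.exp_ne_zero _
  rw [phiE, exp_sub_one_sq θ, exp_sub_one_sq η]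
  push_cast
  field_simp

lemma prodq (n : ℕ) :
    ∏ i ∈ Finset.range n, ((2*(i:ℝ)+1)/(2*i+2)) = (Nat.centralBinom n : ℝ) / 4 ^ n := by
  induction n with
  | zero => simp [Nat.centralBinom]
  | succ k ih =>
    rw [Finset.prod_range_succ, ih]
    have h' : ((k:ℝ)+1) * (Nat.centralBinom (k+1) : ℝ) = 2*(2*k+1) * Nat.centralBinom k := by
      exact_mod_cast Nat.succ_mul_centralBinom_succ k
    have hk : ((k:ℝ)+1) ≠ 0 := by positivity
    have h4 : (4:ℝ)^k ≠ 0 := by positivity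
    field_simp
    linear_combination (-2:ℝ) * 4^k * h'

lemma cb_sq_bound (n : ℕ) : (Nat.centralBinom n : ℝ)^2 * (3*n+1) ≤ 16^n := by
  induction n with
  | zero => norm_num [Nat.centralBinom]
  | succ k ih =>
    have h' : ((k:ℝ)+1) * (Nat.centralBinom (k+1) : ℝ) = 2*(2*k+1) * Nat.centralBinom k := by
      exact_mod_cast Nat.succ_mul_centralBinom_succ k
    have hsq : (((k:ℝ)+1) * (Nat.centralBinom (k+1) : ℝ))^2
        = (2*(2*k+1) * (Nat.centralBinom k:ℝ))^2 := by rw [h']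
    have hcb : (0:ℝ) ≤ (Nat.centralBinom k : ℝ) := Nat.cast_nonneg _
    have hk0 : (0:ℝ) ≤ (k:ℝ) := Nat.cast_nonneg k
    have hpos : (0:ℝ) < ((k:ℝ)+1)^2 := by positivity
    have key : 4*(2*(k:ℝ)+1)^2*(Nat.centralBinom k:ℝ)^2*(3*k+4) ≤ 16*((k:ℝ)+1)^2*16^k := by
      nlinarith [mul_le_mul_of_nonneg_left ih (show (0:ℝ) ≤ 16*((k:ℝ)+1)^2 by positivity),
        mul_nonneg (mul_nonneg hcb hcb) hk0]
    have h3 : (((k:ℝ)+1))^2 * ((Nat.centralBinom (k+1):ℝ)^2 * (3*(k:ℝ)+4))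
        ≤ ((k:ℝ)+1)^2 * 16^(k+1) := by
      have hsq4 := congrArg (fun x : ℝ => x * (3*(k:ℝ)+4)) hsq
      have h16 : (16:ℝ)^(k+1) = 16^k*16 := pow_succ 16 k
      nlinarith [hsq4, key, h16]
    have h4 := (mul_le_mul_iff_right₀ hpos).mp h3
    push_cast
    calc  (Nat.centralBinom (k+1):ℝ)^2 * (3*((k:ℝ)+1)+1)
        = (Nat.centralBinom (k+1):ℝ)^2 * (3*(k:ℝ)+4) := by ring
      _ ≤ 16^(k+1) := h4

lemma momint (n : ℕ) : ∫ θ in (0:ℝ)..(2*π), (c θ)^n = 2*π * (Nat.centralBinom n : ℝ) := by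
  have key : ∀ θ:ℝ, (c θ)^n = 4^n * (fun u => Real.sin u ^ (2*n)) (θ/2) := by
    intro θ
    have h0 : (0:ℝ) ≤ (1 - Real.cos θ)/2 := by linarith [Real.cos_le_one θ]
    have h1 : Real.sin (θ/2)^2 = (1 - Real.cos θ)/2 := by
      calc Real.sin (θ/2)^2 = |Real.sin (θ/2)|^2 := (sq_abs _).symm
        _ = (1 - Real.cos θ)/2 := by rw [Real.abs_sin_half, Real.sq_sqrt h0]
    show (c θ)^n = 4^n * Real.sin (θ/2) ^ (2*n)
    rw [pow_mul, h1, ← mul_pow]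
    congr 1
    unfold c; ring
  calc ∫ θ in (0:ℝ)..(2*π), (c θ)^n
      = ∫ θ in (0:ℝ)..(2*π), 4^n * (fun u => Real.sin u ^ (2*n)) (θ/2) := by
        simp only [key]
    _ = 4^n * ∫ θ in (0:ℝ)..(2*π), (fun u => Real.sin u ^ (2*n)) (θ/2) :=
        intervalIntegral.integral_const_mul _ _
    _ = 4^n * ((2:ℝ) * ∫ u in (0:ℝ)..π, Real.sin u ^ (2*n)) := by
        have hcd := intervalIntegral.integral_comp_div (a := (0:ℝ)) (b := 2*π)
          (fun u => Real.sin u ^ (2*n)) (two_ne_zero)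
        rw [show ((2*π)/2:ℝ) = π by ring, show ((0:ℝ)/2 : ℝ) = 0 by ring] at hcd
        rw [hcd, smul_eq_mul]
    _ = 2*π * (Nat.centralBinom n : ℝ) := by
        rw [integral_sin_pow_even, prodq]
        have h4 : (4:ℝ)^n ≠ 0 := by positivity
        field_simp

lemma S_le (t : ℝ) (ht : t ∈ Set.Ioc (0:ℝ) (1/16)) (m : ℕ) :
    (Nat.centralBinom (m+1) : ℝ)^2 * t^(m+1)/((m:ℝ)+1) ≤ (1/((m:ℝ)+1))^2 := by
  have hN : (0:ℝ) < (m:ℝ)+1 := by positivity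
  have hb := cb_sq_bound (m+1)
  push_cast at hb
  have h1 : (Nat.centralBinom (m+1) : ℝ)^2 ≤ 16^(m+1)/(3*((m:ℝ)+1)+1) := by
    rw [le_div_iff₀ (by positivity)]
    convert hb using 2
  have ht16 : t^(m+1) ≤ (1/16:ℝ)^(m+1) := pow_le_pow_left₀ ht.1.le ht.2 _
  have h2 : (Nat.centralBinom (m+1) : ℝ)^2 * t^(m+1)
      ≤ 16^(m+1)/(3*((m:ℝ)+1)+1) * (1/16)^(m+1) :=
    mul_le_mul h1 ht16 (pow_nonneg ht.1.le _) (by positivity)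
  have h3 : (16:ℝ)^(m+1)/(3*((m:ℝ)+1)+1) * (1/16)^(m+1) = 1/(3*((m:ℝ)+1)+1) := by
    rw [div_mul_eq_mul_div, ← mul_pow]
    norm_num
  calc (Nat.centralBinom (m+1) : ℝ)^2 * t^(m+1)/((m:ℝ)+1)
      ≤ (1/(3*((m:ℝ)+1)+1))/((m:ℝ)+1) := by
        rw [div_le_div_iff₀ hN hN]
        have := h2.trans_eq h3
        nlinarith
    _ ≤ (1/((m:ℝ)+1))/((m:ℝ)+1) := by
        gcongr
        · linarith
    _ = (1/((m:ℝ)+1))^2 := by ring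

lemma S_summable (t : ℝ) (ht : t ∈ Set.Ioc (0:ℝ) (1/16)) :
    Summable (fun m : ℕ => (Nat.centralBinom (m+1) : ℝ)^2 * t^(m+1)/((m:ℝ)+1)) := by
  have h2 : Summable (fun n : ℕ => 1/((n:ℝ))^2) := by
    rw [Real.summable_one_div_nat_pow]; norm_num
  have h3 : Summable (fun n : ℕ => (1/((n:ℝ)+1))^2) := by
    have := (summable_nat_add_iff 1).mpr h2
    refine this.congr fun n => ?_
    push_cast
    rw [one_div, one_div, inv_pow]
  exact Summable.of_nonneg_of_le
    (fun m => div_nonneg (mul_nonneg (sq_nonneg _) (pow_nonneg ht.1.le _)) (by positivity))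
    (S_le t ht) h3

noncomputable def SS (t : ℝ) (m : ℕ) : ℝ := (Nat.centralBinom (m+1) : ℝ)^2 * t^(m+1)/((m:ℝ)+1)
noncomputable def ff (t : ℝ) (m : ℕ) (p : ℝ × ℝ) : ℝ := (t * (c p.1 * c p.2))^(m+1)/((m:ℝ)+1)
noncomputable def FF (t : ℝ) (p : ℝ × ℝ) : ℝ := Real.log (t⁻¹ - c p.1 * c p.2)
noncomputable def negH (t : ℝ) (p : ℝ × ℝ) : ℝ := -Real.log (1 - t * (c p.1 * c p.2))

end Stmt11Aux

open Stmt11Aux Real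
open scoped ENNReal NNReal

theorem stmt11 (t : ℝ) (ht : t ∈ Set.Ioc (0 : ℝ) (1 / 16)) :
    (Summable fun m : ℕ =>
      (Nat.choose (2 * (m + 1)) (m + 1) : ℝ) ^ 2 * t ^ (m + 1) / (m + 1)) ∧
    IntegrableOn
      (fun p : ℝ × ℝ => Real.log ‖((t⁻¹ : ℝ) : ℂ) -
        phiE (Complex.exp (p.1 * Complex.I)) (Complex.exp (p.2 * Complex.I))‖)
      (Set.Icc 0 (2 * Real.pi) ×ˢ Set.Icc 0 (2 * Real.pi)) volume ∧
    (1 / (2 * Real.pi) ^ 2) *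
        ∫ θ in (0 : ℝ)..(2 * Real.pi), ∫ η in (0 : ℝ)..(2 * Real.pi),
          Real.log ‖((t⁻¹ : ℝ) : ℂ) -
            phiE (Complex.exp (θ * Complex.I)) (Complex.exp (η * Complex.I))‖ =
      -Real.log t -
        ∑' m : ℕ, (Nat.choose (2 * (m + 1)) (m + 1) : ℝ) ^ 2 * t ^ (m + 1) / (m + 1) := by
  have hπ : (0:ℝ) < π := Real.pi_pos
  have ht0 : 0 < t := ht.1
  have hchoose : (fun m : ℕ => (Nat.choose (2 * (m + 1)) (m + 1) : ℝ) ^ 2 * t ^ (m + 1) / (m + 1))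
      = SS t := by
    funext m; rfl
  have hS : Summable (SS t) := S_summable t ht
  have htinv : (16:ℝ) ≤ t⁻¹ := by
    have h1 : t * t⁻¹ = 1 := mul_inv_cancel₀ ht0.ne'
    have h2 : (0:ℝ) < t⁻¹ := inv_pos.mpr ht0
    nlinarith [ht.2]
  -- rewrite the integrand
  have habs : ∀ θ η : ℝ, ‖((t⁻¹ : ℝ) : ℂ) -
      phiE (Complex.exp (θ * Complex.I)) (Complex.exp (η * Complex.I))‖ = t⁻¹ - c θ * c η := by
    intro θ η
    rw [phi_eq, ← Complex.ofReal_sub, Complex.norm_real, Real.norm_eq_abs, abs_of_nonneg]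
    nlinarith [c_nonneg θ, c_nonneg η, c_le_four θ, c_le_four η,
      mul_le_mul (c_le_four θ) (c_le_four η) (c_nonneg η) (by norm_num : (0:ℝ) ≤ 4)]
  simp only [habs, hchoose]
  -- basic facts
  have hcc16 : ∀ p : ℝ × ℝ, t * (c p.1 * c p.2) ≤ 1 := by
    intro p
    have h1 : c p.1 * c p.2 ≤ 16 := by
      nlinarith [mul_le_mul (c_le_four p.1) (c_le_four p.2) (c_nonneg p.2) (by norm_num : (0:ℝ) ≤ 4)]
    nlinarith [mul_nonneg (c_nonneg p.1) (c_nonneg p.2), ht.2, ht0]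
  have hccnn : ∀ p : ℝ × ℝ, 0 ≤ t * (c p.1 * c p.2) :=
    fun p => mul_nonneg ht0.le (mul_nonneg (c_nonneg _) (c_nonneg _))
  -- a.e. strict
  have hbad : volume {p : ℝ × ℝ | t * (c p.1 * c p.2) = 1} = 0 := by
    have hsub : {p : ℝ × ℝ | t * (c p.1 * c p.2) = 1} ⊆ {x : ℝ | Real.cos x = -1} ×ˢ Set.univ := by
      rintro ⟨x, y⟩ h
      simp only [Set.mem_setOf_eq] at h
      constructor
      · show Real.cos x = -1
        by_contra hcx
        have hx4 : c x < 4 := by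
          unfold c
          have h1 := Real.neg_one_le_cos x
          rcases lt_or_eq_of_le h1 with h2 | h2
          · linarith
          · exact absurd h2.symm hcx
        nlinarith [c_nonneg x, c_nonneg y, c_le_four y, ht.2, ht0,
          mul_le_mul_of_nonneg_left (c_le_four y) (c_nonneg x)]
      · trivial
    refine measure_mono_null hsub ?_
    have hcnt : ({x : ℝ | Real.cos x = -1}).Countable := by
      have : {x : ℝ | Real.cos x = -1} ⊆ Set.range (fun k : ℤ => π + k * (2 * π)) := by
        intro x hx
        rcases Real.cos_eq_neg_one_iff.mp hx with ⟨k, hk⟩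
        exact ⟨k, hk⟩
      exact Set.Countable.mono this (Set.countable_range _)
    rw [Measure.volume_eq_prod, Measure.prod_prod, hcnt.measure_zero, zero_mul]
  have hae : ∀ᵐ p : ℝ × ℝ ∂(volume), t * (c p.1 * c p.2) < 1 := by
    have h1 : ∀ᵐ p : ℝ × ℝ ∂(volume), ¬ (t * (c p.1 * c p.2) = 1) := by
      rw [ae_iff]
      simpa using hbad
    filter_upwards [h1] with p hp
    exact lt_of_le_of_ne (hcc16 p) hp
  -- pointwise sum
  have hpt : ∀ p : ℝ × ℝ, t * (c p.1 * c p.2) < 1 → HasSum (fun m => ff t m p) (negH t p) := by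
    intro p hp
    have h0 := hccnn p
    exact Real.hasSum_pow_div_log_of_abs_lt_one (x := t * (c p.1 * c p.2))
      (by rw [abs_of_nonneg h0]; exact hp)
  set Q : Set (ℝ × ℝ) := Set.Icc (0:ℝ) (2*π) ×ˢ Set.Icc (0:ℝ) (2*π) with hQdef
  have hQc : IsCompact Q := isCompact_Icc.prod isCompact_Icc
  have hfc : ∀ m, Continuous (ff t m) := by
    intro m
    unfold ff
    exact ((continuous_const.mul ((c_cont.comp continuous_fst).mul
      (c_cont.comp continuous_snd))).pow _).div_const _
  have hfnn : ∀ m p, 0 ≤ ff t m p := by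
    intro m p
    unfold ff
    exact div_nonneg (pow_nonneg (hccnn p) _) (by positivity)
  have hfi : ∀ m, IntegrableOn (ff t m) Q := fun m => (hfc m).locallyIntegrable.integrableOn_isCompact hQc
  have hSnn : ∀ m, 0 ≤ SS t m := by
    intro m
    unfold SS
    exact div_nonneg (mul_nonneg (sq_nonneg _) (pow_nonneg ht0.le _)) (by positivity)
  have hicc : ∀ n : ℕ, ∫ x in Set.Icc (0:ℝ) (2*π), (c x)^n = 2*π*(Nat.centralBinom n : ℝ) := by
    intro n
    rw [MeasureTheory.integral_Icc_eq_integral_Ioc,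
      ← intervalIntegral.integral_of_le (by positivity : (0:ℝ) ≤ 2*π)]
    exact momint n
  have hval : ∀ m, ∫ p in Q, ff t m p = SS t m * (2*π)^2 := by
    intro m
    calc ∫ p in Q, ff t m p
        = ∫ p in Q, (t^(m+1)/((m:ℝ)+1)) * ((fun x => (c x)^(m+1)) p.1 * (fun x => (c x)^(m+1)) p.2) := by
          refine integral_congr_ae (Filter.Eventually.of_forall fun p => ?_)
          unfold ff; rw [mul_pow, mul_pow]; ring
      _ = (t^(m+1)/((m:ℝ)+1)) * ∫ p in Q, ((fun x => (c x)^(m+1)) p.1 * (fun x => (c x)^(m+1)) p.2) :=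
          integral_const_mul _ _
      _ = (t^(m+1)/((m:ℝ)+1)) * ((∫ x in Set.Icc (0:ℝ) (2*π), (c x)^(m+1)) * (∫ y in Set.Icc (0:ℝ) (2*π), (c y)^(m+1))) := by
          rw [hQdef, Measure.volume_eq_prod]
          congr 1
          exact setIntegral_prod_mul (fun x => (c x)^(m+1)) (fun x => (c x)^(m+1)) _ _
      _ = SS t m * (2*π)^2 := by
          rw [hicc]; unfold SS; push_cast; ring
  have hnormval : ∀ m, ∫ p in Q, ‖ff t m p‖ = SS t m * (2*π)^2 := by
    intro m
    rw [← hval m]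
    refine integral_congr_ae (Filter.Eventually.of_forall fun p => ?_)
    exact Real.norm_of_nonneg (hfnn m p)
  have hsummnorm : Summable (fun m => ∫ p in Q, ‖ff t m p‖) :=
    (hS.mul_right ((2*π)^2)).congr fun m => (hnormval m).symm
  have hts : ∑' m, ∫ p in Q, ff t m p = ∫ p in Q, ∑' m, ff t m p :=
    integral_tsum_of_summable_integral_norm (fun m => hfi m) hsummnorm
  -- negH facts
  have hHmeas : Measurable (negH t) := by
    unfold negH
    exact (Real.measurable_log.comp ((continuous_const.sub (continuous_const.mul
      ((c_cont.comp continuous_fst).mul (c_cont.comp continuous_snd)))).measurable)).neg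
  have hHnn : ∀ p, 0 ≤ negH t p := by
    intro p
    unfold negH
    rw [neg_nonneg]
    exact Real.log_nonpos (by linarith [hcc16 p]) (by linarith [hccnn p])
  have hHae : negH t =ᵐ[(volume : Measure (ℝ × ℝ))] fun p => ∑' m, ff t m p := by
    filter_upwards [hae] with p hp
    exact ((hpt p hp).tsum_eq).symm
  have haeQ : ∀ᵐ p ∂(volume.restrict Q), t * (c p.1 * c p.2) < 1 := ae_restrict_of_ae hae
  have hHintQ : IntegrableOn (negH t) Q := by
    refine ⟨hHmeas.aestronglyMeasurable, ?_⟩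
    have e2 : ∫⁻ p in Q, ENNReal.ofReal (negH t p) = ∫⁻ p in Q, ∑' m, ENNReal.ofReal (ff t m p) := by
      refine lintegral_congr_ae ?_
      filter_upwards [haeQ] with p hp
      have hsum := hpt p hp
      rw [← hsum.tsum_eq, ENNReal.ofReal_tsum_of_nonneg (fun m => hfnn m p) hsum.summable]
    have e3 : ∫⁻ p in Q, ∑' m, ENNReal.ofReal (ff t m p) = ∑' m, ∫⁻ p in Q, ENNReal.ofReal (ff t m p) :=
      lintegral_tsum (fun m => ((hfc m).measurable.ennreal_ofReal).aemeasurable)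
    have e4 : ∀ m, ∫⁻ p in Q, ENNReal.ofReal (ff t m p) = ENNReal.ofReal (SS t m * (2*π)^2) := by
      intro m
      rw [← ofReal_integral_eq_lintegral_ofReal (hfi m)
        (Filter.Eventually.of_forall (hfnn m)), hval m]
    have e5 : ∑' m, ENNReal.ofReal (SS t m * (2*π)^2) = ENNReal.ofReal (∑' m, SS t m * (2*π)^2) :=
      (ENNReal.ofReal_tsum_of_nonneg (fun m => mul_nonneg (hSnn m) (by positivity))
        (hS.mul_right _)).symm
    rw [hasFiniteIntegral_iff_ofReal (Filter.Eventually.of_forall hHnn)]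
    rw [e2, e3]
    simp only [e4]
    rw [e5]
    exact ENNReal.ofReal_lt_top
  have hQlt : volume Q < ⊤ := hQc.measure_lt_top
  have hconst_int : IntegrableOn (fun _ : ℝ × ℝ => Real.log t⁻¹) Q :=
    integrableOn_const hQlt.ne
  have hFae : FF t =ᵐ[(volume : Measure (ℝ × ℝ))] fun p => Real.log t⁻¹ - negH t p := by
    filter_upwards [hae] with p hp
    unfold FF negH
    have h1 : t⁻¹ - c p.1 * c p.2 = t⁻¹ * (1 - t * (c p.1 * c p.2)) := by
      field_simp
    rw [h1, Real.log_mul (inv_ne_zero ht0.ne')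
      (show (0:ℝ) < 1 - t * (c p.1 * c p.2) by linarith).ne']
    ring
  have hFintQ : IntegrableOn (FF t) Q := by
    refine Integrable.congr (hconst_int.sub hHintQ) ?_
    exact Filter.EventuallyEq.symm (ae_restrict_of_ae hFae)
  have hHval : ∫ p in Q, negH t p = (2*π)^2 * ∑' m, SS t m := by
    have h1 : ∫ p in Q, negH t p = ∫ p in Q, ∑' m, ff t m p :=
      integral_congr_ae (ae_restrict_of_ae hHae)
    rw [h1, ← hts]
    calc ∑' m, ∫ p in Q, ff t m p = ∑' m, SS t m * (2*π)^2 := tsum_congr fun m => hval m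
      _ = (∑' m, SS t m) * (2*π)^2 := tsum_mul_right
      _ = (2*π)^2 * ∑' m, SS t m := by ring
  have hconst_val : ∫ _ in Q, Real.log t⁻¹ = (2*π)^2 * Real.log t⁻¹ := by
    rw [setIntegral_const]
    have hQvol : volume Q = ENNReal.ofReal (2*π) * ENNReal.ofReal (2*π) := by
      rw [hQdef, Measure.volume_eq_prod, Measure.prod_prod, Real.volume_Icc,
        sub_zero]
    rw [measureReal_def, hQvol, smul_eq_mul, ENNReal.toReal_mul, ENNReal.toReal_ofReal (by positivity)]
    ring
  have hFval : ∫ p in Q, FF t p = (2*π)^2 * Real.log t⁻¹ - (2*π)^2 * ∑' m, SS t m := by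
    rw [integral_congr_ae (ae_restrict_of_ae hFae), integral_sub hconst_int hHintQ,
      hconst_val, hHval]
  have hle2π : (0:ℝ) ≤ 2*π := by positivity
  have hIocss : (Set.Ioc (0:ℝ) (2*π) ×ˢ Set.Ioc (0:ℝ) (2*π) : Set (ℝ×ℝ)) ⊆ Q :=
    Set.prod_mono Set.Ioc_subset_Icc_self Set.Ioc_subset_Icc_self
  have hnull : volume ((Q : Set (ℝ×ℝ)) \ (Set.Ioc (0:ℝ) (2*π) ×ˢ Set.Ioc (0:ℝ) (2*π))) = 0 := by
    have hsub : Q \ (Set.Ioc (0:ℝ) (2*π) ×ˢ Set.Ioc (0:ℝ) (2*π))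
        ⊆ (({0} : Set ℝ) ×ˢ (Set.univ : Set ℝ)) ∪ ((Set.univ : Set ℝ) ×ˢ ({0} : Set ℝ)) := by
      rintro ⟨x, y⟩ ⟨hmem, hnot⟩
      rw [hQdef] at hmem
      simp only [Set.mem_prod, Set.mem_Icc, Set.mem_Ioc] at hmem hnot
      simp only [Set.mem_union, Set.mem_prod, Set.mem_singleton_iff, Set.mem_univ, and_true,
        true_and]
      by_cases hx : 0 < x
      · by_cases hy : 0 < y
        · exact absurd ⟨⟨hx, hmem.1.2⟩, hy, hmem.2.2⟩ hnot
        · right; exact le_antisymm (not_lt.mp hy) hmem.2.1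
      · left; exact le_antisymm (not_lt.mp hx) hmem.1.1
    refine measure_mono_null hsub ?_
    rw [Measure.volume_eq_prod]
    refine measure_union_null ?_ ?_
    · rw [Measure.prod_prod, Real.volume_singleton, zero_mul]
    · rw [Measure.prod_prod, Real.volume_singleton, mul_zero]
  have hsetae : (Set.Ioc (0:ℝ) (2*π) ×ˢ Set.Ioc (0:ℝ) (2*π) : Set (ℝ×ℝ)) =ᵐ[volume] Q := by
    rw [MeasureTheory.ae_eq_set]
    constructor
    · rw [Set.diff_eq_empty.mpr hIocss]; simp
    · exact hnull
  have hstep : (∫ θ in (0:ℝ)..(2*π), ∫ η in (0:ℝ)..(2*π), Real.log (t⁻¹ - c θ * c η))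
      = ∫ p in Q, FF t p := by
    simp only [intervalIntegral.integral_of_le hle2π]
    have hunc : Integrable (Function.uncurry fun θ η => Real.log (t⁻¹ - c θ * c η))
        ((volume.restrict (Set.Ioc (0:ℝ) (2*π))).prod (volume.restrict (Set.Ioc (0:ℝ) (2*π)))) := by
      rw [Measure.prod_restrict, ← Measure.volume_eq_prod]
      exact hFintQ.mono_set hIocss
    have h2 := MeasureTheory.integral_integral hunc
    rw [h2, Measure.prod_restrict, ← Measure.volume_eq_prod]
    exact setIntegral_congr_set hsetae
  refine ⟨hS, hFintQ, ?_⟩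
  rw [hstep, hFval, Real.log_inv]
  have h2π0 : (2*π : ℝ) ≠ 0 := by positivity
  field_simp
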